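/- Fix λ : ℕ with λ ≥ 1, a finite type Y, and a function f : (Fin λ → Bool) → Y. Define qpk ∈ EuclideanSpace ℂ ((Fin λ → Bool) × Y) by qpk(x,y) = 2^{-λ/2} if y = f x and 0 otherwise, and for x* : Fin λ → Bool define qpk' by qpk'(x,y) = (2^λ − 1)^{-1/2} if x ≠ x* and y = f x, and 0 otherwise. Then for every natural number p, the trace distance between the pure states qpk^{⊗p} and qpk'^{⊗p} (half the sum of the absolute values of the eigenvalues of |qpk^{⊗p}⟩⟨qpk^{⊗p}| − |qpk'^{⊗p}⟩⟨qpk'^{⊗p}|) equals Real.sqrt(1 − (1 − 2^{-λ})^p) and is at most Real.sqrt p · 2^{-λ/2}. -/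

import Mathlib

section Helpers

open Matrix in
lemma myTrace {n : Type*} [Fintype n] [DecidableEq n] {A : Matrix n n ℂ} (hA : A.IsHermitian) :
    A.trace = ((∑ i, hA.eigenvalues i : ℝ) : ℂ) := by
  have huu : (hA.eigenvectorUnitary : Matrix n n ℂ) * star (hA.eigenvectorUnitary : Matrix n n ℂ) = 1 :=
    Matrix.mem_unitaryGroup_iff.mp (hA.eigenvectorUnitary).2
  have h1 : (star (hA.eigenvectorUnitary : Matrix n n ℂ) * A * (hA.eigenvectorUnitary : Matrix n n ℂ)).trace = A.trace := by
    rw [Matrix.trace_mul_cycle, huu, Matrix.one_mul]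
  rw [← h1, (by have h := hA.conjStarAlgAut_star_eigenvectorUnitary; rw [Unitary.conjStarAlgAut_star_apply] at h; exact h : star (hA.eigenvectorUnitary : Matrix n n ℂ) * A * (hA.eigenvectorUnitary : Matrix n n ℂ) = diagonal (RCLike.ofReal ∘ hA.eigenvalues)), Matrix.trace_diagonal]
  push_cast
  rfl

open Matrix in
lemma myTraceSq {n : Type*} [Fintype n] [DecidableEq n] {A : Matrix n n ℂ} (hA : A.IsHermitian) :
    (A * A).trace = ((∑ i, (hA.eigenvalues i) ^ 2 : ℝ) : ℂ) := by
  set U : Matrix n n ℂ := (hA.eigenvectorUnitary : Matrix n n ℂ) with hU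
  have huu : U * star U = 1 := Matrix.mem_unitaryGroup_iff.mp (hA.eigenvectorUnitary).2
  have h1 : (star U * (A * A) * U).trace = (A * A).trace := by
    rw [Matrix.trace_mul_cycle, huu, Matrix.one_mul]
  have h2 : (star U * A * U) * (star U * A * U) = star U * (A * A) * U := by
    simp only [Matrix.mul_assoc]
    rw [← Matrix.mul_assoc U (star U) (A * U), huu, Matrix.one_mul]
  have hD : star U * A * U = diagonal (RCLike.ofReal ∘ hA.eigenvalues) :=
    by have h := hA.conjStarAlgAut_star_eigenvectorUnitary; rw [Unitary.conjStarAlgAut_star_apply] at h; exact h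
  rw [← h1, ← h2, hD, Matrix.diagonal_mul_diagonal, Matrix.trace_diagonal]
  push_cast
  simp [Function.comp, sq]

lemma sum_abs_of_card_le_two {ι : Type*} [Fintype ι] (g : ι → ℝ)
    (hcard : Fintype.card {i // g i ≠ 0} ≤ 2) (hsum : ∑ i, g i = 0) :
    ∑ i, |g i| = Real.sqrt (2 * ∑ i, (g i) ^ 2) := by
  classical
  set T : Finset ι := Finset.univ.filter (fun i => g i ≠ 0) with hT
  have hTcard : T.card ≤ 2 := by
    have h : Fintype.card {i // g i ≠ 0} = T.card := by rw [hT]; exact Fintype.card_subtype _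
    omega
  have habs : ∑ i, |g i| = ∑ i ∈ T, |g i| := by
    refine (Finset.sum_subset (Finset.subset_univ T) ?_).symm
    intro i _ hiT
    have : g i = 0 := by by_contra h; exact hiT (by simp [hT, h])
    simp [this]
  have hsq : ∑ i, (g i) ^ 2 = ∑ i ∈ T, (g i) ^ 2 := by
    refine (Finset.sum_subset (Finset.subset_univ T) ?_).symm
    intro i _ hiT
    have : g i = 0 := by by_contra h; exact hiT (by simp [hT, h])
    simp [this]
  have hsumT : ∑ i ∈ T, g i = 0 := by
    rw [← hsum]
    exact Finset.sum_subset (Finset.subset_univ T) (fun i _ hiT => by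
      by_contra h; exact hiT (by simp [hT, h]))
  rw [habs, hsq]
  have h012 : T.card = 0 ∨ T.card = 1 ∨ T.card = 2 := by omega
  rcases h012 with h0 | h1 | h2
  · rw [Finset.card_eq_zero] at h0
    simp [h0]
  · obtain ⟨i, hi⟩ := Finset.card_eq_one.mp h1
    have hgi : g i ≠ 0 := by
      have : i ∈ T := by simp [hi]
      simpa [hT] using this
    rw [hi, Finset.sum_singleton] at hsumT
    exact absurd hsumT hgi
  · obtain ⟨i, j, hij, hij2⟩ := Finset.card_eq_two.mp h2
    rw [hij2, Finset.sum_pair hij] at hsumT ⊢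
    rw [Finset.sum_pair hij]
    have hgj : g j = -g i := by linarith
    rw [hgj]
    have : 2 * ((g i) ^ 2 + (-g i) ^ 2) = (2 * |g i|) ^ 2 := by
      nlinarith [sq_abs (g i)]
    rw [this, Real.sqrt_sq (by positivity), abs_neg]
    ring

lemma rankOne_diff_eigs {ι : Type} [Fintype ι] [DecidableEq ι] (ψ φ : ι → ℂ) (c : ℝ)
    (hψ : ∑ a, ψ a * (starRingEnd ℂ) (ψ a) = 1)
    (hφ : ∑ a, φ a * (starRingEnd ℂ) (φ a) = 1)
    (hc : ∑ a, ψ a * (starRingEnd ℂ) (φ a) = (c : ℂ))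
    (hc' : ∑ a, φ a * (starRingEnd ℂ) (ψ a) = (c : ℂ)) :
    ∃ hM : (Matrix.of fun a b : ι =>
        ψ a * (starRingEnd ℂ) (ψ b) - φ a * (starRingEnd ℂ) (φ b)).IsHermitian,
      ∑ i, |hM.eigenvalues i| = 2 * Real.sqrt (1 - c ^ 2) := by
  set M : Matrix ι ι ℂ := Matrix.of fun a b : ι =>
      ψ a * (starRingEnd ℂ) (ψ b) - φ a * (starRingEnd ℂ) (φ b) with hMdef
  have hHerm : M.IsHermitian := by
    ext a b
    simp only [Matrix.conjTranspose_apply, hMdef, Matrix.of_apply, star_sub, star_mul',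
      RingHomCompTriple.comp_apply, Complex.star_def, Complex.conj_conj, RingHom.id_apply]
    ring
  refine ⟨hHerm, ?_⟩
  have htr : M.trace = 0 := by
    simp [Matrix.trace, Matrix.diag, hMdef, Finset.sum_sub_distrib, hψ, hφ]
  have hsum0 : ∑ i, hHerm.eigenvalues i = 0 := by
    have := (myTrace hHerm).symm.trans htr
    exact_mod_cast this
  have expand : ∀ a b, M a b * M b a =
      (ψ a * (starRingEnd ℂ) (ψ a)) * (ψ b * (starRingEnd ℂ) (ψ b))
      - (ψ a * (starRingEnd ℂ) (φ a)) * (φ b * (starRingEnd ℂ) (ψ b))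
      - (φ a * (starRingEnd ℂ) (ψ a)) * (ψ b * (starRingEnd ℂ) (φ b))
      + (φ a * (starRingEnd ℂ) (φ a)) * (φ b * (starRingEnd ℂ) (φ b)) := by
    intro a b
    simp only [hMdef, Matrix.of_apply]
    ring
  have htr2 : (M * M).trace = ((2 - 2 * c ^ 2 : ℝ) : ℂ) := by
    have h1 : (M * M).trace = ∑ a, ∑ b, M a b * M b a := by
      simp [Matrix.trace, Matrix.diag, Matrix.mul_apply]
    rw [h1]
    simp only [expand, Finset.sum_add_distrib, Finset.sum_sub_distrib, ← Finset.mul_sum,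
      hψ, hφ, hc, hc', ← Finset.sum_mul]
    push_cast
    ring
  have hsum2 : ∑ i, (hHerm.eigenvalues i) ^ 2 = 2 - 2 * c ^ 2 := by
    have := (myTraceSq hHerm).symm.trans htr2
    exact_mod_cast this
  have hrange : LinearMap.range M.mulVecLin ≤ Submodule.span ℂ {ψ, φ} := by
    rintro v ⟨x, rfl⟩
    have hx : M.mulVecLin x = (∑ b, (starRingEnd ℂ) (ψ b) * x b) • ψ
        - (∑ b, (starRingEnd ℂ) (φ b) * x b) • φ := by
      funext a
      simp only [Matrix.mulVecLin_apply, Matrix.mulVec, dotProduct, hMdef,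
        Matrix.of_apply, Pi.sub_apply, Pi.smul_apply, smul_eq_mul, Finset.sum_mul]
      rw [← Finset.sum_sub_distrib]
      exact Finset.sum_congr rfl fun b _ => by ring
    rw [hx]
    exact sub_mem (Submodule.smul_mem _ _ (Submodule.subset_span (by simp)))
      (Submodule.smul_mem _ _ (Submodule.subset_span (by simp)))
  have hrank2 : M.rank ≤ 2 := by
    have h1 : M.rank ≤ Module.finrank ℂ (Submodule.span ℂ ({ψ, φ} : Set (ι → ℂ))) :=
      Submodule.finrank_mono hrange
    refine h1.trans ?_
    classical
    rw [show ({ψ, φ} : Set (ι → ℂ)) = (({ψ, φ} : Finset (ι → ℂ)) : Set (ι → ℂ)) by simp]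
    refine (finrank_span_finset_le_card _).trans ?_
    exact (Finset.card_insert_le _ _).trans (by simp)
  have hcard : Fintype.card {i // hHerm.eigenvalues i ≠ 0} ≤ 2 := by
    rw [← hHerm.rank_eq_card_non_zero_eigs]
    exact hrank2
  rw [sum_abs_of_card_le_two _ hcard hsum0, hsum2]
  rw [show (2 : ℝ) * (2 - 2 * c ^ 2) = 4 * (1 - c ^ 2) by ring,
    Real.sqrt_mul (by norm_num : (0:ℝ) ≤ 4),
    show Real.sqrt 4 = 2 by
      rw [show (4:ℝ) = 2 ^ 2 by norm_num, Real.sqrt_sq (by norm_num : (0:ℝ) ≤ 2)]]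

lemma count_ne {lam : ℕ} (xstar : Fin lam → Bool) (z : ℂ) :
    ∑ x : Fin lam → Bool, (if x ≠ xstar then z else 0) = ((2 ^ lam - 1 : ℕ) : ℂ) * z := by
  classical
  rw [Finset.sum_ite, Finset.sum_const, Finset.sum_const, smul_zero, add_zero,
    Finset.filter_ne' _ xstar, Finset.card_erase_of_mem (Finset.mem_univ _), Finset.card_univ]
  simp [nsmul_eq_mul]

end Helpers

/-- The `p`-fold tensor power of `ψ : EuclideanSpace ℂ α`. -/
noncomputable def tensorPow {α : Type} [Fintype α] (ψ : EuclideanSpace ℂ α) (p : ℕ) :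
    EuclideanSpace ℂ (Fin p → α) :=
  WithLp.toLp 2 (fun a => ∏ i, ψ (a i))

/-- The quantum public key `2^{-λ/2} ∑_{x ∈ {0,1}^λ} |x⟩|f(x)⟩`. -/
noncomputable def qpk (lam : ℕ) (Y : Type) [Fintype Y] [DecidableEq Y]
    (f : (Fin lam → Bool) → Y) : EuclideanSpace ℂ ((Fin lam → Bool) × Y) :=
  WithLp.toLp 2 (fun p => if p.2 = f p.1 then (((1 / Real.sqrt 2) ^ lam : ℝ) : ℂ) else 0)

/-- The public key punctured at `x*`: drops the branch `x*` and renormalizes. -/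
noncomputable def qpkPunc (lam : ℕ) (Y : Type) [Fintype Y] [DecidableEq Y]
    (f : (Fin lam → Bool) → Y) (xstar : Fin lam → Bool) :
    EuclideanSpace ℂ ((Fin lam → Bool) × Y) :=
  WithLp.toLp 2 (fun p => if p.1 ≠ xstar ∧ p.2 = f p.1
    then (((Real.sqrt ((2 : ℝ) ^ lam - 1))⁻¹ : ℝ) : ℂ) else 0)

lemma tensor_sum {α : Type} [Fintype α] (u v : EuclideanSpace ℂ α) (p : ℕ) :
    ∑ a : Fin p → α, (tensorPow u p a * (starRingEnd ℂ) (tensorPow v p a)) =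
      (∑ z, u z * (starRingEnd ℂ) (v z)) ^ p := by
  have h1 : ∀ a : Fin p → α, tensorPow u p a * (starRingEnd ℂ) (tensorPow v p a)
      = ∏ i, (u (a i) * (starRingEnd ℂ) (v (a i))) := by
    intro a
    simp [tensorPow, map_prod, Finset.prod_mul_distrib]
  simp only [h1]
  rw [show (∑ z, u z * (starRingEnd ℂ) (v z)) ^ p
      = ∏ _i : Fin p, (∑ z, u z * (starRingEnd ℂ) (v z)) by
    rw [Finset.prod_const, Finset.card_univ, Fintype.card_fin],
    Finset.prod_univ_sum]
  rw [Fintype.piFinset_univ]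

theorem stmt9 (lam : ℕ) (hlam : 1 ≤ lam) (Y : Type) [Fintype Y] [DecidableEq Y]
    (f : (Fin lam → Bool) → Y) (xstar : Fin lam → Bool) (p : ℕ) :
    ∃ hM : (Matrix.of fun a b : Fin p → (Fin lam → Bool) × Y =>
        tensorPow (qpk lam Y f) p a *
            (starRingEnd ℂ) (tensorPow (qpk lam Y f) p b) -
          tensorPow (qpkPunc lam Y f xstar) p a *
            (starRingEnd ℂ) (tensorPow (qpkPunc lam Y f xstar) p b)).IsHermitian,
      (1 / 2 * ∑ i, |hM.eigenvalues i| =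
        Real.sqrt (1 - (1 - (1 / 2 : ℝ) ^ lam) ^ p)) ∧
      (1 / 2 * ∑ i, |hM.eigenvalues i| ≤
        Real.sqrt p * (1 / Real.sqrt 2) ^ lam) := by
  set t : ℝ := (1 / Real.sqrt 2) ^ lam with ht
  set r : ℝ := (Real.sqrt ((2 : ℝ) ^ lam - 1))⁻¹ with hr
  set c0 : ℝ := Real.sqrt (1 - (1 / 2 : ℝ) ^ lam) with hc0
  have hN2 : (2 : ℝ) ≤ (2 : ℝ) ^ lam := by
    calc (2:ℝ) = 2 ^ 1 := (pow_one 2).symm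
    _ ≤ 2 ^ lam := pow_le_pow_right₀ one_le_two hlam
  have hN1 : (0 : ℝ) ≤ (2 : ℝ) ^ lam - 1 := by linarith
  have htt : t * t = (1 / 2 : ℝ) ^ lam := by
    rw [ht, ← mul_pow]
    congr 1
    rw [div_mul_div_comm, one_mul, Real.mul_self_sqrt (by norm_num : (0:ℝ) ≤ 2)]
  have hrr : r * r = ((2 : ℝ) ^ lam - 1)⁻¹ := by
    rw [hr, ← mul_inv, Real.mul_self_sqrt hN1]
  have hcount : ((2 ^ lam - 1 : ℕ) : ℝ) = (2 : ℝ) ^ lam - 1 := by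
    push_cast [Nat.one_le_two_pow]
    ring
  -- single-copy sums
  have S1 : ∑ z : (Fin lam → Bool) × Y, qpk lam Y f z * (starRingEnd ℂ) (qpk lam Y f z) = 1 := by
    rw [Fintype.sum_prod_type]
    have hx : ∀ x : Fin lam → Bool,
        ∑ y : Y, qpk lam Y f (x, y) * (starRingEnd ℂ) (qpk lam Y f (x, y))
          = ((t * t : ℝ) : ℂ) := by
      intro x
      simp [qpk, apply_ite (starRingEnd ℂ), Complex.conj_ofReal, ite_mul, mul_ite,
        Finset.sum_ite_eq', Complex.ofReal_mul, ht]
    simp only [hx]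
    rw [Finset.sum_const, Finset.card_univ, nsmul_eq_mul]
    have : (Fintype.card (Fin lam → Bool) : ℝ) * (t * t) = 1 := by
      simp only [Fintype.card_fun, Fintype.card_fin, Fintype.card_bool, htt]
      push_cast
      rw [← mul_pow]
      norm_num
    exact_mod_cast congrArg (Complex.ofReal) this
  have S2 : ∑ z : (Fin lam → Bool) × Y,
      qpkPunc lam Y f xstar z * (starRingEnd ℂ) (qpkPunc lam Y f xstar z) = 1 := by
    rw [Fintype.sum_prod_type]
    have hx : ∀ x : Fin lam → Bool,
        ∑ y : Y, qpkPunc lam Y f xstar (x, y) * (starRingEnd ℂ) (qpkPunc lam Y f xstar (x, y))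
          = if x ≠ xstar then ((r * r : ℝ) : ℂ) else 0 := by
      intro x
      by_cases hxs : x = xstar
      · simp [qpkPunc, hxs]
      · simp [qpkPunc, hxs, apply_ite (starRingEnd ℂ), Complex.conj_ofReal, ite_mul, mul_ite,
          Finset.sum_ite_eq', Complex.ofReal_mul, hr]
    simp only [hx]
    rw [count_ne]
    rw [show (((2:ℕ) ^ lam - 1 : ℕ) : ℂ) = (((2:ℝ) ^ lam - 1 : ℝ) : ℂ) by
      rw [← hcount]; push_cast; ring]
    rw [← Complex.ofReal_mul, hrr]
    rw [mul_inv_cancel₀ (by linarith)]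
    norm_num
  have S3 : ∑ z : (Fin lam → Bool) × Y,
      qpk lam Y f z * (starRingEnd ℂ) (qpkPunc lam Y f xstar z) = ((c0 : ℝ) : ℂ) := by
    rw [Fintype.sum_prod_type]
    have hx : ∀ x : Fin lam → Bool,
        ∑ y : Y, qpk lam Y f (x, y) * (starRingEnd ℂ) (qpkPunc lam Y f xstar (x, y))
          = if x ≠ xstar then ((t * r : ℝ) : ℂ) else 0 := by
      intro x
      by_cases hxs : x = xstar
      · simp [qpk, qpkPunc, hxs, apply_ite (starRingEnd ℂ), ite_mul, mul_ite,
          Finset.sum_ite_eq']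
      · simp [qpk, qpkPunc, hxs, apply_ite (starRingEnd ℂ), Complex.conj_ofReal, ite_mul,
          mul_ite, Finset.sum_ite_eq', Complex.ofReal_mul, ht, hr]
    simp only [hx]
    rw [count_ne]
    rw [show (((2:ℕ) ^ lam - 1 : ℕ) : ℂ) = (((2:ℝ) ^ lam - 1 : ℝ) : ℂ) by
      rw [← hcount]; push_cast; ring]
    rw [← Complex.ofReal_mul]
    congr 1
    have h1 : (1 : ℝ) - (1/2) ^ lam = ((2:ℝ)^lam - 1) / (2:ℝ)^lam := by
      field_simp
      rw [sub_mul, one_mul, ← mul_pow]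
      norm_num
    rw [hc0, h1, Real.sqrt_div hN1]
    have hsq : Real.sqrt ((2:ℝ)^lam) = (Real.sqrt 2)^lam := by
      rw [show (2:ℝ)^lam = ((Real.sqrt 2)^lam)^2 from by
        rw [← pow_mul, mul_comm, pow_mul, Real.sq_sqrt (by norm_num : (0:ℝ) ≤ 2)],
        Real.sqrt_sq (by positivity)]
    have ht' : t = (Real.sqrt ((2:ℝ)^lam))⁻¹ := by
      rw [ht, hsq, one_div, inv_pow]
    have hmm : ((2:ℝ)^lam - 1) = Real.sqrt ((2:ℝ)^lam - 1) * Real.sqrt ((2:ℝ)^lam - 1) :=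
      (Real.mul_self_sqrt hN1).symm
    have hs1 : Real.sqrt ((2:ℝ)^lam - 1) ≠ 0 := by
      refine ne_of_gt (Real.sqrt_pos.mpr ?_); linarith
    have hs2 : Real.sqrt ((2:ℝ)^lam) ≠ 0 := by
      refine ne_of_gt (Real.sqrt_pos.mpr ?_); linarith
    calc ((2:ℝ)^lam - 1) * (t * r)
        = (Real.sqrt ((2:ℝ)^lam - 1) * Real.sqrt ((2:ℝ)^lam - 1)) *
            ((Real.sqrt ((2:ℝ)^lam))⁻¹ * (Real.sqrt ((2:ℝ)^lam - 1))⁻¹) := by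
          rw [← hmm, ← ht', ← hr]
      _ = Real.sqrt ((2:ℝ)^lam - 1) / Real.sqrt ((2:ℝ)^lam) := by
          field_simp
  have S3' : ∑ z : (Fin lam → Bool) × Y,
      qpkPunc lam Y f xstar z * (starRingEnd ℂ) (qpk lam Y f z) = ((c0 : ℝ) : ℂ) := by
    have h : ∑ z : (Fin lam → Bool) × Y,
        qpkPunc lam Y f xstar z * (starRingEnd ℂ) (qpk lam Y f z)
        = (starRingEnd ℂ) (∑ z : (Fin lam → Bool) × Y,
            qpk lam Y f z * (starRingEnd ℂ) (qpkPunc lam Y f xstar z)) := by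
      rw [map_sum]
      refine Finset.sum_congr rfl fun z _ => ?_
      simp [mul_comm]
    rw [h, S3, Complex.conj_ofReal]
  -- tensor sums
  have T1 : ∑ a : Fin p → (Fin lam → Bool) × Y,
      tensorPow (qpk lam Y f) p a * (starRingEnd ℂ) (tensorPow (qpk lam Y f) p a) = 1 := by
    rw [tensor_sum, S1, one_pow]
  have T2 : ∑ a : Fin p → (Fin lam → Bool) × Y,
      tensorPow (qpkPunc lam Y f xstar) p a *
        (starRingEnd ℂ) (tensorPow (qpkPunc lam Y f xstar) p a) = 1 := by
    rw [tensor_sum, S2, one_pow]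
  have T3 : ∑ a : Fin p → (Fin lam → Bool) × Y,
      tensorPow (qpk lam Y f) p a *
        (starRingEnd ℂ) (tensorPow (qpkPunc lam Y f xstar) p a) = ((c0 ^ p : ℝ) : ℂ) := by
    rw [tensor_sum, S3]
    push_cast
    ring
  have T3' : ∑ a : Fin p → (Fin lam → Bool) × Y,
      tensorPow (qpkPunc lam Y f xstar) p a *
        (starRingEnd ℂ) (tensorPow (qpk lam Y f) p a) = ((c0 ^ p : ℝ) : ℂ) := by
    rw [tensor_sum, S3']
    push_cast
    ring
  obtain ⟨hM, heq⟩ := rankOne_diff_eigs (tensorPow (qpk lam Y f) p)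
    (tensorPow (qpkPunc lam Y f xstar) p) (c0 ^ p) T1 T2 T3 T3'
  have hx0 : (0:ℝ) ≤ (1/2:ℝ) ^ lam := by positivity
  have hx1 : (1/2:ℝ) ^ lam ≤ 1 := pow_le_one₀ (by norm_num) (by norm_num)
  have hc0sq : c0 ^ 2 = 1 - (1/2:ℝ) ^ lam := Real.sq_sqrt (by linarith)
  have hkey : (c0 ^ p) ^ 2 = (1 - (1/2:ℝ) ^ lam) ^ p := by
    rw [← pow_mul, mul_comm, pow_mul, hc0sq]
  refine ⟨hM, ?_, ?_⟩
  · rw [heq, hkey]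
    ring
  · rw [heq, hkey]
    have hbern : 1 - (p:ℝ) * (1/2:ℝ) ^ lam ≤ (1 - (1/2:ℝ) ^ lam) ^ p := by
      have h := one_add_mul_le_pow (a := -(1/2:ℝ) ^ lam) (by linarith) p
      calc 1 - (p:ℝ) * (1/2:ℝ) ^ lam = 1 + (p:ℝ) * (-(1/2:ℝ) ^ lam) := by ring
        _ ≤ (1 + -(1/2:ℝ) ^ lam) ^ p := h
        _ = (1 - (1/2:ℝ) ^ lam) ^ p := by ring_nf
    have h2 : 1 - (1 - (1/2:ℝ) ^ lam) ^ p ≤ (p:ℝ) * (1/2:ℝ) ^ lam := by linarith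
    have h12 : Real.sqrt ((1/2:ℝ) ^ lam) = (1 / Real.sqrt 2) ^ lam := by
      rw [show ((1:ℝ)/2) ^ lam = ((1 / Real.sqrt 2) ^ lam) ^ 2 from by
        rw [← pow_mul, mul_comm, pow_mul]
        norm_num [div_pow, Real.sq_sqrt],
        Real.sqrt_sq (by positivity)]
    calc 1 / 2 * (2 * Real.sqrt (1 - (1 - (1/2:ℝ) ^ lam) ^ p))
        = Real.sqrt (1 - (1 - (1/2:ℝ) ^ lam) ^ p) := by ring
      _ ≤ Real.sqrt ((p:ℝ) * (1/2:ℝ) ^ lam) := Real.sqrt_le_sqrt h2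
      _ = Real.sqrt (p:ℝ) * Real.sqrt ((1/2:ℝ) ^ lam) :=
          Real.sqrt_mul (Nat.cast_nonneg p) _
      _ = Real.sqrt (p:ℝ) * (1 / Real.sqrt 2) ^ lam := by rw [h12]
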